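/- Let ε > 0 be real, let n ≥ k ≥ 1 be natural numbers, define γ_i = 1 + (ε / H_k)(H_k − H_{k−i}) for 0 ≤ i ≤ k, and let j be a natural number with 0 ≤ j < k. Let α_0, …, α_k and α'_0, …, α'_k be real numbers such that α_j ≤ γ_j, α_i ≥ γ_i for all i with j < i ≤ k, and α'_i ≤ α_j for all i with j < i ≤ k. Then ∑_{i=j+1}^{k} ( α_i − α'_i ) ≥ (ε / H_n) · (k − j). -/

import Mathlib

noncomputable def harm (m : ℕ) : ℝ := ∑ i ∈ Finset.range m, (1 : ℝ) / (i + 1)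

lemma harm_nonneg (m : ℕ) : 0 ≤ harm m :=
  Finset.sum_nonneg fun i _ => by positivity

lemma harm_mono : Monotone harm := fun a b hab =>
  Finset.sum_le_sum_of_subset_of_nonneg (Finset.range_subset_range.2 hab)
    (fun i _ _ => by positivity)

lemma harm_pos {m : ℕ} (hm : 1 ≤ m) : 0 < harm m := by
  have h1 : harm 1 = 1 := by simp [harm]
  have := harm_mono hm
  rw [h1] at this
  linarith

lemma sum_harm (m : ℕ) : ∑ t ∈ Finset.range m, harm t = m * harm m - m := by
  induction m with
  | zero => simp
  | succ m ih =>
    rw [Finset.sum_range_succ, ih]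
    have : harm (m + 1) = harm m + 1 / (m + 1) := by
      simp [harm, Finset.sum_range_succ]
    rw [this]
    push_cast
    field_simp
    ring

lemma key_sum (m : ℕ) : ∑ t ∈ Finset.range m, (harm m - harm t) = m := by
  rw [Finset.sum_sub_distrib, sum_harm, Finset.sum_const, Finset.card_range]
  simp

/-- Per-phase stretch decrease: if `α_j ≤ γ_j`, `α_i ≥ γ_i` and `α'_i ≤ α_j` for
`j < i ≤ k`, then `∑_{i=j+1}^{k} (α_i − α'_i) ≥ (ε/H_n)·(k − j)`. -/
theorem stretch_decrease_per_edge (ε : ℝ) (hε : 0 < ε) (n k : ℕ) (hk : 1 ≤ k)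
    (hkn : k ≤ n) (j : ℕ) (hj : j < k) (a a' : ℕ → ℝ)
    (haj : a j ≤ 1 + ε / harm k * (harm k - harm (k - j)))
    (hai : ∀ i : ℕ, j < i → i ≤ k → 1 + ε / harm k * (harm k - harm (k - i)) ≤ a i)
    (ha' : ∀ i : ℕ, j < i → i ≤ k → a' i ≤ a j) :
    ε / harm n * ((k : ℝ) - (j : ℝ)) ≤ ∑ i ∈ Finset.Icc (j + 1) k, (a i - a' i) := by
  have hHk : 0 < harm k := harm_pos hk
  have hHn : 0 < harm n := harm_pos (hk.trans hkn)
  -- pointwise lower bound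
  have hterm : ∀ i ∈ Finset.Icc (j + 1) k,
      ε / harm k * (harm (k - j) - harm (k - i)) ≤ a i - a' i := by
    intro i hi
    rw [Finset.mem_Icc] at hi
    have h1 := hai i hi.1 hi.2
    have h2 := ha' i hi.1 hi.2
    have : ε / harm k * (harm (k - j) - harm (k - i))
        = (1 + ε / harm k * (harm k - harm (k - i)))
          - (1 + ε / harm k * (harm k - harm (k - j))) := by ring
    rw [this]
    linarith
  have hsum := Finset.sum_le_sum hterm
  -- reindex the lower-bound sum
  have himg : Finset.Icc (j + 1) k = (Finset.range (k - j)).image (fun t => k - t) := by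
    ext x
    simp only [Finset.mem_Icc, Finset.mem_image, Finset.mem_range]
    constructor
    · intro h; exact ⟨k - x, by omega, by omega⟩
    · rintro ⟨t, ht, rfl⟩; omega
  have hval : ∑ i ∈ Finset.Icc (j + 1) k,
      ε / harm k * (harm (k - j) - harm (k - i)) = ε / harm k * ((k : ℝ) - j) := by
    rw [himg, Finset.sum_image (by intro x hx y hy hxy; simp only [Finset.coe_range, Set.mem_Iio, Finset.mem_range] at *; omega)]
    have : ∀ t ∈ Finset.range (k - j),
        ε / harm k * (harm (k - j) - harm (k - (k - t)))
          = ε / harm k * (harm (k - j) - harm t) := by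
      intro t ht
      rw [Finset.mem_range] at ht
      congr 3
      omega
    rw [Finset.sum_congr rfl this, ← Finset.mul_sum, key_sum]
    have : ((k - j : ℕ) : ℝ) = (k : ℝ) - j := by
      have := hj.le
      push_cast [Nat.cast_sub this]
      ring
    rw [this]
  rw [hval] at hsum
  refine le_trans ?_ hsum
  have hdiv : ε / harm n ≤ ε / harm k :=
    div_le_div_of_nonneg_left hε.le hHk (harm_mono hkn)
  have hkj : (0 : ℝ) ≤ (k : ℝ) - j := by
    have : (j : ℝ) ≤ k := Nat.cast_le.2 hj.le
    linarith
  exact mul_le_mul_of_nonneg_right hdiv hkj
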